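/- Let φ be a continuous flow on a compact metric space X with open set of fixed points. For each ε > 0 there exists δ > 0 such that if x ∈ X is not a fixed point and s : ℝ → ℝ is continuous with s(0) = 0 and d(φ_t(x), φ_{s(t)}(x)) < δ for all t ∈ ℝ, then |s(t) − t| < ε for all t ∈ ℝ. -/

import Mathlib

theorem stmt9 {X : Type*} [MetricSpace X] [CompactSpace X]
    (φ : ℝ → X → X)
    (hcont : Continuous fun p : ℝ × X => φ p.1 p.2)
    (h0 : ∀ x, φ 0 x = x)
    (hadd : ∀ t s x, φ (t + s) x = φ t (φ s x))
    (hopen : IsOpen {x : X | ∀ t, φ t x = x}) :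
    ∀ ε > (0:ℝ), ∃ δ > (0:ℝ), ∀ (x : X) (s : ℝ → ℝ),
      (¬ ∀ t, φ t x = x) → Continuous s → s 0 = 0 →
      (∀ t, dist (φ t x) (φ (s t) x) < δ) →
      ∀ t : ℝ, |s t - t| < ε := by
  intro ε hε
  -- continuity of time-t maps
  have hct : ∀ t : ℝ, Continuous (φ t) := fun t =>
    hcont.comp (continuous_const.prodMk continuous_id)
  -- inverse property
  have hinv : ∀ (t : ℝ) (x : X), φ (-t) (φ t x) = x := by
    intro t x
    rw [← hadd, neg_add_cancel, h0]
  -- the set of non-fixed points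
  set C : Set X := {x : X | ¬ ∀ t, φ t x = x} with hCdef
  have hCclosed : IsClosed C := by
    have : C = {x : X | ∀ t, φ t x = x}ᶜ := by ext x; simp [hCdef]
    rw [this]; exact hopen.isClosed_compl
  have hCcompact : IsCompact C := hCclosed.isCompact
  -- orbit points of non-fixed points are non-fixed
  have horb : ∀ (x : X), x ∈ C → ∀ t : ℝ, φ t x ∈ C := by
    intro x hx t hy
    apply hx
    have hx0 : x = φ t x := by
      conv_lhs => rw [← hinv t x, hy (-t)]
    intro u
    rw [hx0, hy u, ← hx0]
  -- integer multiples of a period are periods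
  have hmuln : ∀ (x : X) (r : ℝ), φ r x = x → ∀ n : ℕ, φ (n * r) x = x := by
    intro x r hr n
    induction n with
    | zero => simpa using h0 x
    | succ n ih =>
      have : ((n : ℝ) + 1) * r = r + n * r := by ring
      rw [Nat.cast_succ, this, hadd, ih, hr]
  have hmulz : ∀ (x : X) (r : ℝ), φ r x = x → ∀ m : ℤ, φ (m * r) x = x := by
    intro x r hr m
    rcases m with n | n
    · exact_mod_cast hmuln x r hr n
    · have h1 : φ ((n + 1 : ℕ) * r) x = x := hmuln x r hr (n + 1)
      have : ((Int.negSucc n : ℤ) : ℝ) * r = -(((n + 1 : ℕ) : ℝ) * r) := by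
        push_cast [Int.negSucc_eq]; ring
      rw [this]
      conv_lhs => rw [← h1]
      exact hinv _ x
  -- Claim A: no arbitrarily small periods of non-fixed points
  have claimA : ∃ p₀ > (0:ℝ), ∀ x ∈ C, ∀ r : ℝ, 0 < r → r ≤ p₀ → φ r x ≠ x := by
    by_contra hA
    push_neg at hA
    choose! xf hxC rf hr0 hrle hfix using fun n : ℕ => hA (1 / (n + 1)) (by positivity)
    obtain ⟨a, haC, ψ, hψ, hlim⟩ := hCcompact.tendsto_subseq hxC
    apply haC
    intro t
    -- u n : fractional remainder of t modulo r n
    set u : ℕ → ℝ := fun n => rf n * Int.fract (t / rf n) with hu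
    have hueq : ∀ n, φ t (xf n) = φ (u n) (xf n) := by
      intro n
      have hrpos := hr0 n
      have ht : t = u n + (⌊t / rf n⌋ : ℤ) * rf n := by
        rw [hu]
        simp only [Int.fract]
        field_simp
        ring
      conv_lhs => rw [ht, hadd, hmulz _ _ (hfix n) ⌊t / rf n⌋]
    have hu0 : Filter.Tendsto (fun n => u (ψ n)) Filter.atTop (nhds 0) := by
      apply squeeze_zero (fun n => ?_) (fun n => ?_)
        (tendsto_one_div_add_atTop_nhds_zero_nat.comp hψ.tendsto_atTop)
      · exact mul_nonneg (hr0 _).le (Int.fract_nonneg _)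
      · calc rf (ψ n) * Int.fract (t / rf (ψ n)) ≤ rf (ψ n) * 1 := by
              exact mul_le_mul_of_nonneg_left (Int.fract_lt_one _).le (hr0 _).le
          _ ≤ 1 / (ψ n + 1) := by rw [mul_one]; exact hrle (ψ n)
    have hlim1 : Filter.Tendsto (fun n => φ (u (ψ n)) (xf (ψ n))) Filter.atTop (nhds a) := by
      have := hcont.tendsto (0, a)
      have h2 : Filter.Tendsto (fun n => ((u (ψ n), xf (ψ n)) : ℝ × X)) Filter.atTop
          (nhds (0, a)) := hu0.prodMk_nhds hlim
      have h3 := this.comp h2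
      simpa [h0, Function.comp_def] using h3
    have hlim2 : Filter.Tendsto (fun n => φ t (xf (ψ n))) Filter.atTop (nhds (φ t a)) :=
      ((hct t).tendsto a).comp hlim
    have : φ t a = a := by
      refine tendsto_nhds_unique ?_ hlim1
      simpa only [hueq] using hlim2
    exact this
  obtain ⟨p₀, hp₀, hper⟩ := claimA
  set ε' : ℝ := min ε p₀ / 2 with hε'def
  have hε'pos : 0 < ε' := by positivity
  have hε'lt : ε' < ε := by
    have := min_le_left ε p₀; rw [hε'def]; linarith
  have hε'le : ε' ≤ p₀ := by
    have := min_le_right ε p₀; rw [hε'def]; linarith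
  -- the gap function
  set g : X → ℝ := fun y => min (dist y (φ ε' y)) (dist y (φ (-ε') y)) with hg
  have hgcont : Continuous g := ((continuous_id.dist (hct ε')).min (continuous_id.dist (hct (-ε'))))
  have hgpos : ∀ y ∈ C, 0 < g y := by
    intro y hy
    have h1 : φ ε' y ≠ y := hper y hy ε' hε'pos hε'le
    have h2 : φ (-ε') y ≠ y := by
      intro h
      apply h1
      conv_lhs => rw [← h, ← hadd]
      rw [add_neg_cancel, h0]
    rw [hg]
    exact lt_min (dist_pos.mpr (Ne.symm h1)) (dist_pos.mpr (Ne.symm h2))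
  rcases C.eq_empty_or_nonempty with hCe | hCne
  · refine ⟨1, one_pos, fun x s hx _ _ _ _ => absurd ?_ (Set.notMem_empty x)⟩
    rw [← hCe]; exact hx
  obtain ⟨y₀, hy₀C, hy₀min'⟩ := hCcompact.exists_isMinOn hCne hgcont.continuousOn
  have hy₀min : ∀ y ∈ C, g y₀ ≤ g y := fun y hy => isMinOn_iff.mp hy₀min' y hy
  refine ⟨g y₀, hgpos y₀ hy₀C, fun x s hx hscont hs0 hd t => ?_⟩
  by_contra hcon
  push_neg at hcon
  have hge : ε' ≤ |s t - t| := le_trans hε'lt.le hcon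
  -- IVT
  have hfc : Continuous fun t => |s t - t| := (hscont.sub continuous_id).abs
  have : ε' ∈ Set.uIcc (|s 0 - 0|) (|s t - t|) := by
    rw [Set.mem_uIcc]
    left
    constructor
    · rw [hs0]; simpa using hε'pos.le
    · exact hge
  obtain ⟨t₀, _, ht₀⟩ := intermediate_value_uIcc hfc.continuousOn this
  -- at t₀ the reparametrization error is exactly ε'
  have hyC : φ t₀ x ∈ C := horb x hx t₀
  have hdist : dist (φ t₀ x) (φ (s t₀) x) = dist (φ t₀ x) (φ (s t₀ - t₀) (φ t₀ x)) := by
    rw [← hadd, sub_add_cancel]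
  have hbound : g y₀ ≤ dist (φ t₀ x) (φ (s t₀) x) := by
    rcases abs_eq hε'pos.le |>.mp ht₀ with h | h
    · calc g y₀ ≤ g (φ t₀ x) := hy₀min _ hyC
        _ ≤ dist (φ t₀ x) (φ ε' (φ t₀ x)) := min_le_left _ _
        _ = dist (φ t₀ x) (φ (s t₀) x) := by rw [hdist, h]
    · calc g y₀ ≤ g (φ t₀ x) := hy₀min _ hyC
        _ ≤ dist (φ t₀ x) (φ (-ε') (φ t₀ x)) := min_le_right _ _
        _ = dist (φ t₀ x) (φ (s t₀) x) := by rw [hdist, h]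
  exact absurd (hd t₀) (not_lt.mpr hbound)
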